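/- Fix r > 0 and θ ∈ ℝ, and let V be the 4×4 real matrix with rows (r,0,0,0), (0,1/r,0,0), (0,0,cos θ, sin θ), (0,0,−sin θ, cos θ). Then: (a) Vᵀ·Q_W·V = Q_W, i.e. V ∈ Aut(Q_W); and (b) for every nonzero b ∈ ℝ and every (x,y) ∈ ℝ², the ACC row vector of the circle scaled by r and rotated by θ satisfies w(b/r, r(x cos θ − y sin θ), r(x sin θ + y cos θ)) = w(b,x,y)·V, where w(b,x,y) = (b(x²+y²) − 1/b, b, bx, by). Thus the dilation z ↦ re^{iθ}z of the plane acts on augmented curvature-center coordinates by right multiplication by V. -/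

import Mathlib

open Matrix Real

/-- The matrix of the Wilker quadratic form. -/
noncomputable def QW : Matrix (Fin 4) (Fin 4) ℝ :=
  !![0, -4, 0, 0; -4, 0, 0, 0; 0, 0, 2, 0; 0, 0, 0, 2]

/-- The augmented curvature-center coordinate (ACC) row vector of an oriented
circle with nonzero signed curvature `b` and center `(x, y)`. -/
noncomputable def acc (b x y : ℝ) : Fin 4 → ℝ :=
  ![b * (x ^ 2 + y ^ 2) - 1 / b, b, b * x, b * y]

/-- The dilation `z ↦ r·e^{iθ}·z` of the plane (`r > 0`) acts on augmented
curvature-center coordinates by right multiplication by the matrix `V` below,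
which lies in `Aut(Q_W)`. -/
theorem dilation_acts_on_acc (r θ : ℝ) (hr : 0 < r)
    (V : Matrix (Fin 4) (Fin 4) ℝ)
    (hV : V = !![r, 0, 0, 0;
                 0, 1 / r, 0, 0;
                 0, 0, Real.cos θ, Real.sin θ;
                 0, 0, -Real.sin θ, Real.cos θ]) :
    Vᵀ * QW * V = QW ∧
    ∀ b x y : ℝ, b ≠ 0 →
      acc (b / r) (r * (x * Real.cos θ - y * Real.sin θ))
          (r * (x * Real.sin θ + y * Real.cos θ))
        = Matrix.vecMul (acc b x y) V := by
  have hr0 : r ≠ 0 := ne_of_gt hr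
  have hcs := Real.sin_sq_add_cos_sq θ
  subst hV
  constructor
  · ext i j
    fin_cases i <;> fin_cases j <;>
      simp [QW, Matrix.mul_apply, Fin.sum_univ_four, Matrix.vecHead, Matrix.vecTail]
    · field_simp
    · field_simp
    · linear_combination 2 * hcs
    · ring
    · ring
    · linear_combination 2 * hcs
  · intro b x y hb
    funext i
    fin_cases i
    · simp [acc, Matrix.vecMul, dotProduct, Fin.sum_univ_four,
        Matrix.vecHead, Matrix.vecTail]
      field_simp
      linear_combination (b ^ 2 * x ^ 2 + b ^ 2 * y ^ 2) * hcs
    · simp [acc, Matrix.vecMul, dotProduct, Fin.sum_univ_four,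
        Matrix.vecHead, Matrix.vecTail]
      field_simp
    · simp [acc, Matrix.vecMul, dotProduct, Fin.sum_univ_four,
        Matrix.vecHead, Matrix.vecTail]
      field_simp
      ring
    · simp [acc, Matrix.vecMul, dotProduct, Fin.sum_univ_four,
        Matrix.vecHead, Matrix.vecTail]
      field_simp
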